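/- Let Λ be a nonempty finite set, let c_n be a nonnegative integer for each n ∈ Λ, and suppose s(∑_{n∈Λ} 2^(c_n)) = t. Then there exists a partition of Λ into t pairwise disjoint nonempty subsets Ξ_1, …, Ξ_t such that for each k with 1 ≤ k ≤ t, the subsum ∑_{n∈Ξ_k} 2^(c_n) is a power of 2; moreover these t powers of 2 are exactly the t distinct powers of 2 occurring in the binary expansion of ∑_{n∈Λ} 2^(c_n). -/

import Mathlib

/-- `s n` is the number of nonzero digits (ones) in the binary expansion of `n`. -/
def s (n : ℕ) : ℕ := (Nat.digits 2 n).count 1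

lemma s_two_mul (n : ℕ) : s (2 * n) = s n := by
  rcases Nat.eq_zero_or_pos n with h | h
  · simp [h]
  · unfold s
    rw [Nat.digits_def' (by norm_num) (by omega)]
    simp [Nat.mul_div_cancel_left _ (by norm_num : 0 < 2), Nat.mul_mod_right]

lemma s_two_mul_add_one (n : ℕ) : s (2 * n + 1) = s n + 1 := by
  unfold s
  rw [Nat.digits_def' (by norm_num) (by omega)]
  have h1 : (2 * n + 1) % 2 = 1 := by omega
  have h2 : (2 * n + 1) / 2 = n := by omega
  simp [h1, h2]

lemma s_eq_length (n : ℕ) : s n = n.bitIndices.length := by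
  induction n using Nat.strong_induction_on with
  | _ n IH =>
    rcases Nat.eq_zero_or_pos n with h | h
    · simp [h, s]
    · rcases Nat.even_or_odd n with ⟨m, hm⟩ | ⟨m, hm⟩
      · subst hm
        rw [(by ring : m + m = 2 * m), s_two_mul, Nat.bitIndices_two_mul,
          List.length_map, IH m (by omega)]
      · subst hm
        rw [s_two_mul_add_one, Nat.bitIndices_two_mul_add_one]
        simp [IH m (by omega)]

lemma testBit_iff_mem_bitIndices (n j : ℕ) : n.testBit j = true ↔ j ∈ n.bitIndices := by
  induction n using Nat.strong_induction_on generalizing j with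
  | _ n IH =>
    rcases Nat.eq_zero_or_pos n with h | h
    · simp [h]
    · rcases Nat.even_or_odd n with ⟨m, hm⟩ | ⟨m, hm⟩
      · have hm' : n = 2 * m := by omega
        subst hm'
        rw [Nat.bitIndices_two_mul]
        cases j with
        | zero => simp [Nat.testBit_zero, Nat.mul_mod_right]
        | succ j =>
          rw [Nat.testBit_add_one, Nat.mul_div_cancel_left _ (by norm_num : 0 < 2),
            IH m (by omega)]
          simp
      · subst hm
        rw [Nat.bitIndices_two_mul_add_one]
        cases j with
        | zero => simp [Nat.testBit_zero]
        | succ j =>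
          rw [Nat.testBit_add_one, (by omega : (2*m+1)/2 = m), IH m (by omega)]
          simp

lemma bitIndices_finset_sum (E : Finset ℕ) :
    (∑ i ∈ E, 2 ^ i).bitIndices = E.sort (· ≤ ·) := by
  have h := Nat.bitIndices_twoPowsum (L := E.sort (· ≤ ·)) (Finset.sortedLT_sort E)
  rw [← h]
  congr 1
  rw [((Finset.sort_perm_toList E (· ≤ ·)).map (fun i => 2 ^ i)).sum_eq]
  exact (E.sum_map_toList (fun i => 2 ^ i)).symm

lemma s_finset_sum (E : Finset ℕ) : s (∑ i ∈ E, 2 ^ i) = E.card := by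
  rw [s_eq_length, bitIndices_finset_sum, Finset.length_sort]

lemma testBit_finset_sum (E : Finset ℕ) (j : ℕ) :
    (∑ i ∈ E, 2 ^ i).testBit j = true ↔ j ∈ E := by
  rw [testBit_iff_mem_bitIndices, bitIndices_finset_sum, Finset.mem_sort]

lemma partition_aux {α : Type*} [DecidableEq α] (N : ℕ) :
    ∀ (Λ : Finset α) (c : α → ℕ) (t : ℕ), Λ.Nonempty → s (∑ n ∈ Λ, 2 ^ c n) = t →
    Λ.card = N →
    ∃ (Ξ : Fin t → Finset α) (e : Fin t → ℕ),
      (∀ k, (Ξ k).Nonempty) ∧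
      (∀ k, Ξ k ⊆ Λ) ∧
      (∀ k k', k ≠ k' → Disjoint (Ξ k) (Ξ k')) ∧
      (Finset.univ.biUnion Ξ = Λ) ∧
      (∀ k, ∑ n ∈ Ξ k, 2 ^ c n = 2 ^ e k) ∧
      Function.Injective e ∧
      (∀ k, (∑ n ∈ Λ, 2 ^ c n).testBit (e k) = true) := by
  induction N using Nat.strong_induction_on with
  | _ N IH =>
    intro Λ c t hΛ ht hN
    by_cases hinj : Set.InjOn c Λ
    · -- all exponents distinct: singletons
      have himg : ∑ n ∈ Λ, 2 ^ c n = ∑ i ∈ Λ.image c, 2 ^ i :=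
        (Finset.sum_image (fun x hx y hy h => hinj hx hy h)).symm
      have hcard : Λ.card = t := by
        rw [← ht, himg, s_finset_sum, Finset.card_image_of_injOn hinj]
      let f : Fin t → α := fun k => (Λ.equivFin.symm (Fin.cast hcard.symm k) : α)
      have hfmem : ∀ k, f k ∈ Λ := fun k => (Λ.equivFin.symm (Fin.cast hcard.symm k)).2
      have hfinj : Function.Injective f := by
        intro k k' h
        have := Subtype.ext h
        simpa using (Fin.cast_injective hcard.symm)
          (Λ.equivFin.symm.injective this)
      refine ⟨fun k => {f k}, fun k => c (f k), ?_, ?_, ?_, ?_, ?_, ?_, ?_⟩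
      · intro k; exact Finset.singleton_nonempty _
      · intro k; simpa using hfmem k
      · intro k k' hkk'
        simp only [Finset.disjoint_singleton]
        exact fun h => hkk' (hfinj h)
      · ext x
        simp only [Finset.mem_biUnion, Finset.mem_univ, true_and, Finset.mem_singleton]
        constructor
        · rintro ⟨k, rfl⟩; exact hfmem k
        · intro hx
          refine ⟨Fin.cast hcard (Λ.equivFin ⟨x, hx⟩), ?_⟩
          simp [f]
      · intro k; simp
      · intro k k' h
        exact hfinj (hinj (hfmem k) (hfmem k') h)
      · intro k
        rw [himg, testBit_finset_sum]
        exact Finset.mem_image_of_mem c (hfmem k)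
    · -- two equal exponents: merge
      rw [Set.InjOn] at hinj
      push_neg at hinj
      obtain ⟨n, hn, m, hm, hcc, hne⟩ := hinj
      rw [Finset.mem_coe] at hn hm
      set Λ' := Λ.erase m with hΛ'
      set c' := Function.update c n (c n + 1) with hc'
      have hnΛ' : n ∈ Λ' := Finset.mem_erase.2 ⟨hne, hn⟩
      have hmΛ' : m ∉ Λ' := Finset.notMem_erase m Λ
      have hsum : ∑ k ∈ Λ', 2 ^ c' k = ∑ k ∈ Λ, 2 ^ c k := by
        rw [← Finset.add_sum_erase Λ' (fun k => 2 ^ c' k) hnΛ',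
          ← Finset.add_sum_erase Λ (fun k => 2 ^ c k) hm,
          ← Finset.add_sum_erase Λ' (fun k => 2 ^ c k) hnΛ']
        have h1 : c' n = c n + 1 := Function.update_self n _ c
        have h2 : ∑ k ∈ Λ'.erase n, 2 ^ c' k = ∑ k ∈ Λ'.erase n, 2 ^ c k := by
          refine Finset.sum_congr rfl fun k hk => ?_
          rw [hc', Function.update_of_ne (Finset.mem_erase.1 hk).1]
        rw [h1, h2, ← hcc, pow_succ]
        ring
      have hcardN : Λ'.card = N - 1 := by
        rw [Finset.card_erase_of_mem hm, hN]
      have hN1 : 1 ≤ N := by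
        rw [← hN]; exact Finset.card_pos.2 hΛ
      obtain ⟨Ξ', e, h1, h2, h3, h4, h5, h6, h7⟩ :=
        IH (N - 1) (by omega) Λ' c' t ⟨n, hnΛ'⟩ (by rw [hsum]; exact ht) hcardN
      have hmnot : ∀ k, m ∉ Ξ' k := fun k hk => hmΛ' (h2 k hk)
      have hΞ'Λ : ∀ k, Ξ' k ⊆ Λ := fun k => (h2 k).trans (Finset.erase_subset m Λ)
      refine ⟨fun k => if n ∈ Ξ' k then insert m (Ξ' k) else Ξ' k, e,
        ?_, ?_, ?_, ?_, ?_, h6, ?_⟩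
      · intro k
        dsimp only
        by_cases h : n ∈ Ξ' k
        · rw [if_pos h]; exact Finset.insert_nonempty _ _
        · rw [if_neg h]; exact h1 k
      · intro k
        by_cases h : n ∈ Ξ' k <;> simp only [h, if_true, if_false]
        · exact Finset.insert_subset hm (hΞ'Λ k)
        · exact hΞ'Λ k
      · intro k k' hkk'
        have hd := h3 k k' hkk'
        by_cases ha : n ∈ Ξ' k <;> by_cases hb : n ∈ Ξ' k' <;>
          simp only [ha, hb, if_true, if_false]
        · exact absurd (Finset.disjoint_left.1 hd ha hb) (fun x => x)
        · rw [Finset.disjoint_insert_left]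
          exact ⟨hmnot k', hd⟩
        · rw [Finset.disjoint_insert_right]
          exact ⟨hmnot k, hd⟩
        · exact hd
      · ext x
        simp only [Finset.mem_biUnion, Finset.mem_univ, true_and]
        constructor
        · rintro ⟨k, hk⟩
          by_cases h : n ∈ Ξ' k
          · rw [if_pos h, Finset.mem_insert] at hk
            rcases hk with rfl | hk
            · exact hm
            · exact hΞ'Λ k hk
          · rw [if_neg h] at hk
            exact hΞ'Λ k hk
        · intro hx
          have hnmem : n ∈ Finset.univ.biUnion Ξ' := h4 ▸ hnΛ'
          obtain ⟨k0, _, hk0⟩ := Finset.mem_biUnion.1 hnmem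
          by_cases hxm : x = m
          · exact ⟨k0, by rw [if_pos hk0, hxm]; exact Finset.mem_insert_self m _⟩
          · have hx' : x ∈ Λ' := Finset.mem_erase.2 ⟨hxm, hx⟩
            obtain ⟨k, _, hk⟩ := Finset.mem_biUnion.1 (h4 ▸ hx')
            refine ⟨k, ?_⟩
            by_cases h : n ∈ Ξ' k
            · rw [if_pos h]; exact Finset.mem_insert_of_mem hk
            · rw [if_neg h]; exact hk
      · intro k
        dsimp only
        by_cases h : n ∈ Ξ' k
        · rw [if_pos h, Finset.sum_insert (hmnot k),
            ← Finset.add_sum_erase (Ξ' k) (fun j => 2 ^ c j) h, ← h5 k,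
            ← Finset.add_sum_erase (Ξ' k) (fun j => 2 ^ c' j) h]
          have hup : c' n = c n + 1 := Function.update_self n _ c
          have hrest : ∑ j ∈ (Ξ' k).erase n, 2 ^ c' j = ∑ j ∈ (Ξ' k).erase n, 2 ^ c j := by
            refine Finset.sum_congr rfl fun j hj => ?_
            rw [hc', Function.update_of_ne (Finset.mem_erase.1 hj).1]
          rw [hup, hrest, ← hcc, pow_succ]
          ring
        · rw [if_neg h, ← h5 k]
          refine Finset.sum_congr rfl fun j hj => ?_
          rw [hc', Function.update_of_ne (by rintro rfl; exact h hj)]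
      · intro k
        rw [← hsum]
        exact h7 k

theorem partition_into_power_subsums {α : Type*} [DecidableEq α]
    (Λ : Finset α) (hΛ : Λ.Nonempty) (c : α → ℕ) (t : ℕ)
    (ht : s (∑ n ∈ Λ, 2 ^ c n) = t) :
    ∃ (Ξ : Fin t → Finset α) (e : Fin t → ℕ),
      (∀ k, (Ξ k).Nonempty) ∧
      (∀ k, Ξ k ⊆ Λ) ∧
      (∀ k k', k ≠ k' → Disjoint (Ξ k) (Ξ k')) ∧
      (Finset.univ.biUnion Ξ = Λ) ∧
      (∀ k, ∑ n ∈ Ξ k, 2 ^ c n = 2 ^ e k) ∧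
      Function.Injective e ∧
      (∀ k, (∑ n ∈ Λ, 2 ^ c n).testBit (e k) = true) := by
  exact partition_aux Λ.card Λ c t hΛ ht rfl
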